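/- Let γ be a positive integer, let Y be a finite set, and let s : Y → ℝ≥0 satisfy Σ_{y∈Y} s(y) ≤ 1. Then Y can be partitioned into γ (possibly empty) sets Y^1,…,Y^γ such that for every i ∈ {1,…,γ} and every positive integer t, |{y ∈ Y^i : s(y) > 1/(t·γ)}| ≤ t. In particular, listing Y as y_1,…,y_ℓ with s(y_1) ≥ … ≥ s(y_ℓ), one has s(y_i) ≤ 1/i for every i, and the partition Y^i = {y_i, y_{γ+i}, y_{2γ+i}, …} works. -/

import Mathlib

open scoped Classical

/-- If `Y` is a finite set with nonnegative sizes summing to at most `1`,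
then `Y` can be partitioned into `γ` (possibly empty) parts `P 0, …, P (γ-1)` such that
each part contains at most `t` elements of size exceeding `1/(t·γ)`, for every `t ≥ 1`. -/
theorem partition_into_matroid_parts (γ : ℕ) (hγ : 0 < γ)
    (Y : Type) [Fintype Y] [DecidableEq Y]
    (s : Y → ℝ) (hs : ∀ y, 0 ≤ s y) (htot : ∑ y, s y ≤ 1) :
    ∃ P : Fin γ → Finset Y,
      (∀ y : Y, ∃! i : Fin γ, y ∈ P i) ∧
      ∀ (i : Fin γ) (t : ℕ), 0 < t →
        ((P i).filter (fun y => 1 / ((t : ℝ) * (γ : ℝ)) < s y)).card ≤ t := by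
  classical
  set idx := Fintype.equivFin Y with hidx
  set key : Y → Lex (ℝ × ℕ) := fun y => toLex (-(s y), (idx y : ℕ)) with hkey
  have keyinj : Function.Injective key := by
    intro a b h
    have h2 : ((idx a : ℕ)) = (idx b : ℕ) := congrArg (fun p => (ofLex p).2) h
    exact idx.injective (Fin.ext h2)
  set rank : Y → ℕ :=
    fun y => (Finset.univ.filter (fun z => key z < key y)).card with hrank
  have mono : ∀ a b : Y, key a < key b → rank a < rank b := by
    intro a b hab
    apply Finset.card_lt_card
    constructor
    · intro z hz
      simp only [Finset.mem_filter, Finset.mem_univ, true_and] at hz ⊢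
      exact lt_trans hz hab
    · intro hsub
      have ha : a ∈ Finset.univ.filter (fun z => key z < key b) := by
        simp [hab]
      have := hsub ha
      simp only [Finset.mem_filter, Finset.mem_univ, true_and] at this
      exact lt_irrefl _ this
  have rankinj : Function.Injective rank := by
    intro a b h
    by_contra hab
    have hk : key a ≠ key b := fun e => hab (keyinj e)
    rcases lt_or_gt_of_ne hk with hlt | hlt
    · exact absurd h (ne_of_lt (mono a b hlt))
    · exact absurd h.symm (ne_of_lt (mono b a hlt))
  have hbound : ∀ y : Y, ((rank y : ℝ) + 1) * s y ≤ 1 := by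
    intro y
    set S := insert y (Finset.univ.filter (fun z => key z < key y)) with hS
    have hyS : y ∉ Finset.univ.filter (fun z => key z < key y) := by simp
    have hcard : S.card = rank y + 1 := by
      rw [hS, Finset.card_insert_of_notMem hyS]
    have hle : ∀ z ∈ S, s y ≤ s z := by
      intro z hz
      rcases Finset.mem_insert.mp hz with rfl | hz
      · exact le_refl _
      · simp only [Finset.mem_filter, Finset.mem_univ, true_and] at hz
        have := hz
        rw [hkey] at this
        rcases Prod.Lex.lt_iff.mp this with h1 | ⟨h1, _⟩
        · simpa [ofLex_toLex] using le_of_lt h1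
        · simp only [ofLex_toLex, neg_inj] at h1
          exact le_of_eq h1.symm
    have h1 : (S.card : ℝ) * s y ≤ ∑ z ∈ S, s z := by
      have := Finset.card_nsmul_le_sum S s (s y) hle
      simpa [nsmul_eq_mul] using this
    have h2 : ∑ z ∈ S, s z ≤ ∑ z, s z :=
      Finset.sum_le_sum_of_subset_of_nonneg (Finset.subset_univ S)
        (fun z _ _ => hs z)
    calc ((rank y : ℝ) + 1) * s y = (S.card : ℝ) * s y := by rw [hcard]; push_cast; ring
      _ ≤ ∑ z ∈ S, s z := h1
      _ ≤ ∑ z, s z := h2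
      _ ≤ 1 := htot
  refine ⟨fun i => Finset.univ.filter (fun y => rank y % γ = i.val), ?_, ?_⟩
  · intro y
    refine ⟨⟨rank y % γ, Nat.mod_lt _ hγ⟩, by simp, ?_⟩
    intro j hj
    simp only [Finset.mem_filter, Finset.mem_univ, true_and] at hj
    exact Fin.ext hj.symm
  · intro i t ht
    have hpos : (0 : ℝ) < (t : ℝ) * (γ : ℝ) := by positivity
    calc ((Finset.univ.filter (fun y => rank y % γ = i.val)).filter
            (fun y => 1 / ((t : ℝ) * (γ : ℝ)) < s y)).card
        ≤ ((Finset.range (t * γ)).filter (fun m => m % γ = i.val)).card := by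
          apply Finset.card_le_card_of_injOn rank
          · intro y hy
            simp only [Finset.mem_coe, Finset.mem_filter, Finset.mem_univ, true_and] at hy
            obtain ⟨h1, h2⟩ := hy
            simp only [Finset.mem_coe, Finset.mem_filter, Finset.mem_range]
            refine ⟨?_, h1⟩
            have hb := hbound y
            have h3 : 1 < s y * ((t : ℝ) * (γ : ℝ)) := by
              rw [div_lt_iff₀ hpos] at h2
              linarith
            have h4 : ((rank y : ℝ) + 1) < (t : ℝ) * (γ : ℝ) := by
              nlinarith [Nat.cast_nonneg (α := ℝ) (rank y), hs y]
            have h5 : (rank y : ℝ) < (t : ℝ) * (γ : ℝ) := by linarith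
            exact_mod_cast h5
          · exact Set.InjOn.mono (Set.subset_univ _) rankinj.injOn
      _ ≤ (Finset.range t).card := by
          apply Finset.card_le_card_of_injOn (fun m => m / γ)
          · intro m hm
            simp only [Finset.mem_coe, Finset.mem_filter, Finset.mem_range] at hm ⊢
            exact Nat.div_lt_of_lt_mul (by rw [Nat.mul_comm]; exact hm.1)
          · intro m1 h1 m2 h2 he
            simp only [Finset.mem_coe, Finset.mem_filter, Finset.mem_range] at h1 h2
            dsimp only at he
            have d1 := Nat.div_add_mod m1 γ
            have d2 := Nat.div_add_mod m2 γ
            rw [he] at d1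
            omega
      _ = t := Finset.card_range t
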